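/- Let B be a fractional Brownian motion with Hurst index H ∈ (0,1) on [0,1]. Fix δ ∈ (0,H), constants ν, ν* > 0, and set ρ = 2(ν + ν*). Let N = sup{k ≥ 1 : max_{0 ≤ j ≤ 2^{k-1}-1} |a^k_j − b^k_j| ≥ ρ·2^{−(H−δ)k}} (with N = 0 if the set is empty). Then: (i) for every t > 0, E[exp(tN)] < ∞ (in particular N < ∞ almost surely); and (ii) almost surely, for every integer n > N, ‖B − B_n‖_∞ ≤ ρ·2^{−(H−δ)(n+1)} / (1 − 2^{−(H−δ)}). -/

import Mathlib

open MeasureTheory ProbabilityTheory Filter Real Topology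
open scoped NNReal ENNReal

noncomputable section

/-- Covariance function of fractional Brownian motion with Hurst index `H`. -/
def fbmCov (H s t : ℝ) : ℝ := (s ^ (2 * H) + t ^ (2 * H) - |s - t| ^ (2 * H)) / 2

/-- `B` is a fractional Brownian motion with Hurst index `H` on `[0,1]` under `P`. -/
structure IsFBM {Ω : Type*} [MeasurableSpace Ω] (P : Measure Ω) (H : ℝ)
    (B : Ω → ℝ → ℝ) : Prop where
  continuousOn : ∀ ω, ContinuousOn (B ω) (Set.Icc 0 1)
  init : ∀ ω, B ω 0 = 0
  measurable : ∀ t : ℝ, Measurable fun ω => B ω t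
  gaussian : ∀ (m : ℕ) (t : Fin m → ℝ), (∀ i, t i ∈ Set.Icc (0:ℝ) 1) →
    ∀ c : Fin m → ℝ,
      Measure.map (fun ω => ∑ i, c i * B ω (t i)) P =
        gaussianReal 0 (∑ i, ∑ j, c i * c j * fbmCov H (t i) (t j)).toNNReal

/-- `max_{0 ≤ j ≤ 2^{k-1}-1} |a^k_j − b^k_j|` for the path `B`. -/
def mdGap (B : ℝ → ℝ) (k : ℕ) : ℝ :=
  (Finset.range (2 ^ (k - 1))).sup' (Finset.nonempty_range_iff.mpr (by positivity))
    fun j => |B ((2 * (j:ℝ) + 1) / 2 ^ k) -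
      (B ((j:ℝ) / 2 ^ (k - 1)) + B (((j:ℝ) + 1) / 2 ^ (k - 1))) / 2|

/-- The level of the last record-breaker:
`N = sup {k ≥ 1 : max_j |a^k_j − b^k_j| ≥ ρ·2^{−(H−δ)k}}` (`0` if the set is empty). -/
def lastRB (H δ ρ : ℝ) (B : ℝ → ℝ) : ℕ :=
  sSup {k : ℕ | 1 ≤ k ∧ ρ * (2:ℝ) ^ (-(H - δ) * (k:ℝ)) ≤ mdGap B k}

/-- Piecewise linear interpolation of `f` on the dyadic grid `D_n`. -/
def dyadicInterp (n : ℕ) (f : ℝ → ℝ) (t : ℝ) : ℝ :=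
  f ((⌊t * 2 ^ n⌋ : ℝ) / 2 ^ n) +
    (t * 2 ^ n - (⌊t * 2 ^ n⌋ : ℝ)) *
      (f (((⌊t * 2 ^ n⌋ : ℝ) + 1) / 2 ^ n) - f ((⌊t * 2 ^ n⌋ : ℝ) / 2 ^ n))

/-- Supremum norm of `u` over `[0,1]`. -/
def supNorm01 (u : ℝ → ℝ) : ℝ := ⨆ t : Set.Icc (0:ℝ) 1, |u (t : ℝ)|

/-- Theorem (last record-breaker has finite exponential moments, and beyond it the
uniform truncation error is controlled): (i) `E[exp(tN)] < ∞` for all `t > 0`;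
(ii) a.s., for every `n > N`, `‖B − B_n‖_∞ ≤ ρ·2^{−(H−δ)(n+1)}/(1 − 2^{−(H−δ)})`. -/
lemma dyadicInterp_one (f : ℝ → ℝ) (m : ℕ) : dyadicInterp m f 1 = f 1 := by
  have h : (1:ℝ) * 2 ^ m = ((2^m : ℤ) : ℝ) := by push_cast; ring
  have h2 : ((2^m : ℤ) : ℝ) / 2^m = 1 := by
    push_cast; field_simp
  simp only [dyadicInterp, h, Int.floor_intCast, h2, sub_self, zero_mul, add_zero]

lemma step_bound (f : ℝ → ℝ) (K : ℕ) {t : ℝ} (ht0 : 0 ≤ t) (ht1 : t < 1) :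
    |dyadicInterp (K+1) f t - dyadicInterp K f t| ≤ mdGap f (K+1) := by
  set x := t * 2 ^ K with hxdef
  have hx0 : 0 ≤ x := by positivity
  have hxlt : x < 2 ^ K := by
    rw [hxdef]
    calc t * 2 ^ K < 1 * 2 ^ K := by
          apply mul_lt_mul_of_pos_right ht1 (by positivity)
      _ = 2 ^ K := one_mul _
  set j : ℤ := ⌊x⌋ with hjdef
  have hj0 : 0 ≤ j := Int.floor_nonneg.2 hx0
  have hjle : (j:ℝ) ≤ x := Int.floor_le x
  have hxj1 : x < (j:ℝ) + 1 := Int.lt_floor_add_one x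
  have hjlt : j < 2 ^ K := by
    have : x < ((2^K : ℤ) : ℝ) := by push_cast; exact hxlt
    exact_mod_cast Int.floor_lt.2 this
  set j' : ℕ := j.toNat with hj'def
  have hjr : (j' : ℝ) = (j : ℝ) := by
    have := Int.toNat_of_nonneg hj0
    exact_mod_cast congrArg (Int.cast : ℤ → ℝ) this
  have hjmem : j' ∈ Finset.range (2 ^ ((K+1) - 1)) := by
    simp only [Nat.add_sub_cancel, Finset.mem_range]
    have : (j' : ℤ) < 2 ^ K := by rw [Int.toNat_of_nonneg hj0]; exact hjlt
    exact_mod_cast this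
  have key : |f ((2 * (j':ℝ) + 1) / 2 ^ (K+1)) -
      (f ((j':ℝ) / 2 ^ ((K+1)-1)) + f (((j':ℝ) + 1) / 2 ^ ((K+1)-1))) / 2| ≤ mdGap f (K+1) := by
    unfold mdGap
    exact Finset.le_sup' (fun j : ℕ => |f ((2*(j:ℝ)+1)/2^(K+1)) -
      (f ((j:ℝ)/2^((K+1)-1)) + f (((j:ℝ)+1)/2^((K+1)-1)))/2|) hjmem
  simp only [Nat.add_sub_cancel] at key
  have hx2 : t * 2 ^ (K+1) = 2 * x := by rw [hxdef]; ring
  by_cases hcase : 2 * x < 2 * (j:ℝ) + 1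
  · have hfl2 : ⌊t * 2 ^ (K+1)⌋ = 2 * j := by
      rw [hx2]
      rw [Int.floor_eq_iff]
      constructor
      · push_cast; linarith
      · push_cast; linarith
    have e1 : ((2 * j : ℤ):ℝ) / 2 ^ (K+1) = (j':ℝ) / 2 ^ K := by
      rw [hjr]; push_cast; ring
    have e2 : (((2 * j : ℤ):ℝ) + 1) / 2 ^ (K+1) = (2 * (j':ℝ) + 1) / 2 ^ (K+1) := by
      rw [hjr]; push_cast; ring
    have e3 : ((j:ℤ):ℝ) = (j':ℝ) := hjr.symm
    rw [dyadicInterp, dyadicInterp, hfl2, ← hxdef, hx2, ← hjdef, e1, e2, e3]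
    have expand : f ((j':ℝ) / 2 ^ K) + (2 * x - ((2 * j : ℤ):ℝ)) *
          (f ((2 * (j':ℝ) + 1) / 2 ^ (K+1)) - f ((j':ℝ) / 2 ^ K)) -
        (f ((j':ℝ) / 2 ^ K) + (x - (j':ℝ)) *
          (f (((j':ℝ) + 1) / 2 ^ K) - f ((j':ℝ) / 2 ^ K)))
        = (2 * x - 2 * (j:ℝ)) * (f ((2 * (j':ℝ) + 1) / 2 ^ (K+1)) -
            (f ((j':ℝ) / 2 ^ K) + f (((j':ℝ) + 1) / 2 ^ K)) / 2) := by
      rw [hjr]; push_cast; ring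
    rw [expand, abs_mul]
    have hθ : |2 * x - 2 * (j:ℝ)| ≤ 1 := by
      rw [abs_of_nonneg (by linarith)]; linarith
    calc |2 * x - 2 * (j:ℝ)| * _ ≤ 1 * _ :=
          mul_le_mul_of_nonneg_right hθ (abs_nonneg _)
      _ ≤ mdGap f (K+1) := by rw [one_mul]; exact key
  · push_neg at hcase
    have hfl2 : ⌊t * 2 ^ (K+1)⌋ = 2 * j + 1 := by
      rw [hx2]
      rw [Int.floor_eq_iff]
      constructor
      · push_cast; linarith
      · push_cast; linarith
    have e1 : ((2 * j + 1 : ℤ):ℝ) / 2 ^ (K+1) = (2 * (j':ℝ) + 1) / 2 ^ (K+1) := by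
      rw [hjr]; push_cast; ring
    have e2 : (((2 * j + 1 : ℤ):ℝ) + 1) / 2 ^ (K+1) = ((j':ℝ) + 1) / 2 ^ K := by
      rw [hjr]; push_cast; ring
    have e3 : ((j:ℤ):ℝ) = (j':ℝ) := hjr.symm
    rw [dyadicInterp, dyadicInterp, hfl2, ← hxdef, hx2, ← hjdef, e1, e2, e3]
    have expand : f ((2 * (j':ℝ) + 1) / 2 ^ (K+1)) + (2 * x - ((2 * j + 1 : ℤ):ℝ)) *
          (f (((j':ℝ) + 1) / 2 ^ K) - f ((2 * (j':ℝ) + 1) / 2 ^ (K+1))) -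
        (f ((j':ℝ) / 2 ^ K) + (x - (j':ℝ)) *
          (f (((j':ℝ) + 1) / 2 ^ K) - f ((j':ℝ) / 2 ^ K)))
        = (2 * (j:ℝ) + 2 - 2 * x) * (f ((2 * (j':ℝ) + 1) / 2 ^ (K+1)) -
            (f ((j':ℝ) / 2 ^ K) + f (((j':ℝ) + 1) / 2 ^ K)) / 2) := by
      rw [hjr]; push_cast; ring
    rw [expand, abs_mul]
    have hθ : |2 * (j:ℝ) + 2 - 2 * x| ≤ 1 := by
      rw [abs_of_nonneg (by linarith)]; linarith
    calc |2 * (j:ℝ) + 2 - 2 * x| * _ ≤ 1 * _ :=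
          mul_le_mul_of_nonneg_right hθ (abs_nonneg _)
      _ ≤ mdGap f (K+1) := by rw [one_mul]; exact key

lemma tendsto_dyadicInterp {f : ℝ → ℝ} (hf : ContinuousOn f (Set.Icc 0 1)) {t : ℝ}
    (ht0 : 0 ≤ t) (ht1 : t < 1) :
    Tendsto (fun m => dyadicInterp m f t) atTop (𝓝 (f t)) := by
  set x : ℕ → ℝ := fun m => (⌊t * 2 ^ m⌋ : ℝ) / 2 ^ m with hxdef
  set y : ℕ → ℝ := fun m => ((⌊t * 2 ^ m⌋ : ℝ) + 1) / 2 ^ m with hydef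
  have hpow : ∀ m : ℕ, (0:ℝ) < 2 ^ m := fun m => by positivity
  have hfl_le : ∀ m, (⌊t * 2 ^ m⌋ : ℝ) ≤ t * 2 ^ m := fun m => Int.floor_le _
  have hfl_gt : ∀ m, t * 2 ^ m < (⌊t * 2 ^ m⌋ : ℝ) + 1 := fun m => Int.lt_floor_add_one _
  have hfl_lt : ∀ m, (⌊t * 2 ^ m⌋ : ℝ) + 1 ≤ 2 ^ m := by
    intro m
    have h1 : ⌊t * 2 ^ m⌋ < (2 ^ m : ℤ) := by
      apply Int.floor_lt.2
      push_cast
      calc t * 2 ^ m < 1 * 2 ^ m := mul_lt_mul_of_pos_right ht1 (hpow m)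
        _ = 2 ^ m := one_mul _
    have : (⌊t * 2 ^ m⌋ : ℝ) + 1 ≤ ((2 ^ m : ℤ) : ℝ) := by exact_mod_cast h1
    push_cast at this
    exact this
  have hx_le : ∀ m, x m ≤ t := fun m =>
    (div_le_iff₀ (hpow m)).2 (hfl_le m)
  have hx_ge : ∀ m, t - 1 / 2 ^ m ≤ x m := by
    intro m
    rw [sub_le_iff_le_add, hxdef]
    rw [← add_div, le_div_iff₀ (hpow m)]
    exact (hfl_gt m).le
  have hx_mem : ∀ m, x m ∈ Set.Icc (0:ℝ) 1 := by
    intro m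
    constructor
    · apply div_nonneg _ (hpow m).le
      exact_mod_cast Int.floor_nonneg.2 (by positivity)
    · rw [div_le_one (hpow m)]
      linarith [hfl_lt m]
  have hy_mem : ∀ m, y m ∈ Set.Icc (0:ℝ) 1 := by
    intro m
    constructor
    · apply div_nonneg _ (hpow m).le
      have h0 : (0:ℝ) ≤ (⌊t * 2 ^ m⌋:ℝ) := by exact_mod_cast Int.floor_nonneg.2 (by positivity)
      linarith
    · rw [div_le_one (hpow m)]
      exact hfl_lt m
  have hy_le : ∀ m, y m ≤ t + 1 / 2 ^ m := by
    intro m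
    rw [hydef]
    simp only
    rw [div_le_iff₀ (hpow m)]
    have := hfl_le m
    have h2 : (t + 1 / 2 ^ m) * 2 ^ m = t * 2 ^ m + 1 := by field_simp
    rw [h2]
    linarith
  have hy_ge : ∀ m, t ≤ y m := by
    intro m
    rw [hydef]
    simp only
    rw [le_div_iff₀ (hpow m)]
    linarith [hfl_gt m]
  have hhalf : Tendsto (fun m : ℕ => 1 / (2:ℝ) ^ m) atTop (𝓝 0) := by
    simp_rw [one_div, ← inv_pow]
    exact tendsto_pow_atTop_nhds_zero_of_lt_one (by norm_num) (by norm_num)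
  have hx_tendsto : Tendsto x atTop (𝓝 t) := by
    apply tendsto_of_tendsto_of_tendsto_of_le_of_le (g := fun m => t - 1/2^m)
      (h := fun _ => t) _ tendsto_const_nhds hx_ge hx_le
    simpa using tendsto_const_nhds.sub hhalf
  have hy_tendsto : Tendsto y atTop (𝓝 t) := by
    apply tendsto_of_tendsto_of_tendsto_of_le_of_le (g := fun _ => t)
      (h := fun m => t + 1/2^m) tendsto_const_nhds _ hy_ge hy_le
    simpa using tendsto_const_nhds.add hhalf
  have hct : ContinuousWithinAt f (Set.Icc 0 1) t := hf t ⟨ht0, ht1.le⟩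
  have hfx : Tendsto (fun m => f (x m)) atTop (𝓝 (f t)) :=
    hct.tendsto.comp (tendsto_nhdsWithin_of_tendsto_nhds_of_eventually_within x hx_tendsto
      (Eventually.of_forall hx_mem))
  have hfy : Tendsto (fun m => f (y m)) atTop (𝓝 (f t)) :=
    hct.tendsto.comp (tendsto_nhdsWithin_of_tendsto_nhds_of_eventually_within y hy_tendsto
      (Eventually.of_forall hy_mem))
  have hgx : Tendsto (fun m => |f (x m) - f t|) atTop (𝓝 0) := by
    have := (hfx.sub_const (f t)).abs
    simpa using this
  have hgy : Tendsto (fun m => |f (y m) - f t|) atTop (𝓝 0) := by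
    have := (hfy.sub_const (f t)).abs
    simpa using this
  have hdiff : Tendsto (fun m => dyadicInterp m f t - f t) atTop (𝓝 0) := by
    apply squeeze_zero_norm (a := fun m => 2 * |f (x m) - f t| + |f (y m) - f t|)
    · intro m
      have hθ0 : 0 ≤ t * 2 ^ m - (⌊t * 2 ^ m⌋ : ℝ) := by linarith [hfl_le m]
      have hθ1 : t * 2 ^ m - (⌊t * 2 ^ m⌋ : ℝ) ≤ 1 := by linarith [hfl_gt m]
      have hexpr : dyadicInterp m f t - f t
          = (f (x m) - f t) + (t * 2 ^ m - (⌊t * 2 ^ m⌋ : ℝ)) * (f (y m) - f (x m)) := by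
        simp only [dyadicInterp, hxdef, hydef]
        ring
      rw [hexpr]
      have h1 : ‖(f (x m) - f t) + (t * 2 ^ m - (⌊t * 2 ^ m⌋ : ℝ)) * (f (y m) - f (x m))‖
          ≤ |f (x m) - f t| + |(t * 2 ^ m - (⌊t * 2 ^ m⌋ : ℝ)) * (f (y m) - f (x m))| :=
        norm_add_le _ _
      refine h1.trans ?_
      rw [abs_mul]
      have h2 : |(t * 2 ^ m - (⌊t * 2 ^ m⌋ : ℝ))| ≤ 1 := by rw [abs_of_nonneg hθ0]; exact hθ1
      have h3 : |f (y m) - f (x m)| ≤ |f (y m) - f t| + |f (x m) - f t| := by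
        have := abs_sub_abs_le_abs_sub (f (y m) - f t) (f (x m) - f t)
        calc |f (y m) - f (x m)| = |(f (y m) - f t) - (f (x m) - f t)| := by ring_nf
          _ ≤ |f (y m) - f t| + |f (x m) - f t| := abs_sub _ _
      nlinarith [abs_nonneg (f (y m) - f (x m)), abs_nonneg (f (x m) - f t),
        abs_nonneg (f (y m) - f t)]
    · simpa using (hgx.const_mul 2).add hgy
  have := hdiff.add_const (f t)
  simpa using this

lemma det_bound {f : ℝ → ℝ} (hf : ContinuousOn f (Set.Icc 0 1)) {β ρ : ℝ}
    (hβ : 0 < β) (hρ : 0 ≤ ρ) (n : ℕ)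
    (hgap : ∀ k, n < k → mdGap f k ≤ ρ * 2 ^ (-β * (k:ℝ))) :
    supNorm01 (fun t => f t - dyadicInterp n f t)
      ≤ ρ * 2 ^ (-β * ((n:ℝ)+1)) / (1 - 2 ^ (-β)) := by
  set r : ℝ := 2 ^ (-β) with hrdef
  have hr0 : 0 < r := Real.rpow_pos_of_pos two_pos _
  have hr1 : r < 1 := Real.rpow_lt_one_of_one_lt_of_neg one_lt_two (by linarith)
  set K : ℝ := ρ * 2 ^ (-β * ((n:ℝ)+1)) / (1 - r) with hKdef
  have hK0 : 0 ≤ K := by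
    apply div_nonneg
    · exact mul_nonneg hρ (Real.rpow_pos_of_pos two_pos _).le
    · linarith
  have key : ∀ t : ℝ, t ∈ Set.Icc (0:ℝ) 1 → |f t - dyadicInterp n f t| ≤ K := by
    rintro t ⟨ht0, ht1⟩
    rcases eq_or_lt_of_le ht1 with h1 | h1
    · subst h1
      rw [dyadicInterp_one, sub_self, abs_zero]
      exact hK0
    -- partial sums bound
    have claim1 : ∀ m : ℕ, |dyadicInterp (n+m) f t - dyadicInterp n f t| ≤ K := by
      intro m
      have hsum : |dyadicInterp (n+m) f t - dyadicInterp n f t|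
          ≤ ∑ i ∈ Finset.range m, ρ * 2 ^ (-β * ((n:ℝ) + 1 + i)) := by
        induction m with
        | zero => simp
        | succ m ih =>
          have htri : |dyadicInterp (n+(m+1)) f t - dyadicInterp n f t|
              ≤ |dyadicInterp (n+m+1) f t - dyadicInterp (n+m) f t|
                + |dyadicInterp (n+m) f t - dyadicInterp n f t| := by
            have : dyadicInterp (n+(m+1)) f t - dyadicInterp n f t
                = (dyadicInterp (n+m+1) f t - dyadicInterp (n+m) f t)
                  + (dyadicInterp (n+m) f t - dyadicInterp n f t) := by
              rw [show n+(m+1) = n+m+1 from rfl]; ring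
            rw [this]; exact abs_add_le _ _
          have hstep := step_bound f (n+m) ht0 h1
          have hgap' := hgap (n+m+1) (by omega)
          have hcast : (((n+m+1 : ℕ)):ℝ) = (n:ℝ) + 1 + m := by push_cast; ring
          rw [hcast] at hgap'
          rw [Finset.sum_range_succ]
          calc |dyadicInterp (n+(m+1)) f t - dyadicInterp n f t|
              ≤ |dyadicInterp (n+m+1) f t - dyadicInterp (n+m) f t|
                + |dyadicInterp (n+m) f t - dyadicInterp n f t| := htri
            _ ≤ ρ * 2 ^ (-β * ((n:ℝ) + 1 + m))
                + ∑ i ∈ Finset.range m, ρ * 2 ^ (-β * ((n:ℝ) + 1 + i)) := by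
                have := hstep.trans hgap'
                linarith [ih]
            _ = ∑ i ∈ Finset.range m, ρ * 2 ^ (-β * ((n:ℝ) + 1 + i))
                + ρ * 2 ^ (-β * ((n:ℝ) + 1 + m)) := by ring
      refine hsum.trans ?_
      have hterm : ∀ i : ℕ, ρ * 2 ^ (-β * ((n:ℝ) + 1 + i))
          = ρ * 2 ^ (-β * ((n:ℝ)+1)) * r ^ i := by
        intro i
        have h1 : -β * ((n:ℝ) + 1 + i) = -β * ((n:ℝ)+1) + -β * (i:ℝ) := by ring
        rw [h1, Real.rpow_add (by norm_num : (0:ℝ) < 2), ← mul_assoc]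
        congr 1
        rw [hrdef, Real.rpow_mul (by norm_num : (0:ℝ) ≤ 2), Real.rpow_natCast]
      simp_rw [hterm]
      rw [← Finset.mul_sum]
      have hgeom : ∑ i ∈ Finset.range m, r ^ i ≤ (1 - r)⁻¹ := by
        have hne : (1:ℝ) - r ≠ 0 := by linarith
        rw [geom_sum_eq hr1.ne, div_le_iff_of_neg (by linarith : r - 1 < 0)]
        have hm1 : (1-r)⁻¹ * (r-1) = -1 := by
          have h2 : r - 1 = -(1 - r) := by ring
          rw [h2, mul_neg, inv_mul_cancel₀ hne]
        have : (0:ℝ) ≤ r ^ m := by positivity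
        linarith
      calc ρ * 2 ^ (-β * ((n:ℝ)+1)) * ∑ i ∈ Finset.range m, r ^ i
          ≤ ρ * 2 ^ (-β * ((n:ℝ)+1)) * (1 - r)⁻¹ := by
            apply mul_le_mul_of_nonneg_left hgeom
            exact mul_nonneg hρ (Real.rpow_pos_of_pos two_pos _).le
        _ = K := by rw [hKdef, div_eq_mul_inv]
    have claim2 : Tendsto (fun m => |dyadicInterp (n+m) f t - dyadicInterp n f t|) atTop
        (𝓝 |f t - dyadicInterp n f t|) := by
      have h0 : Tendsto (fun m => dyadicInterp (n+m) f t) atTop (𝓝 (f t)) := by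
        have := (tendsto_dyadicInterp hf ht0 h1).comp (tendsto_add_atTop_nat n)
        simpa [Function.comp_def, Nat.add_comm] using this
      exact ((h0.sub_const _).abs)
    exact le_of_tendsto claim2 (Eventually.of_forall claim1)
  rw [supNorm01]
  have hne : Nonempty (Set.Icc (0:ℝ) 1) := ⟨⟨0, by norm_num, by norm_num⟩⟩
  exact ciSup_le fun ⟨t, ht⟩ => key t ht

lemma fbm_var_eval (H : ℝ) (hH : 0 < H) (p h ε : ℝ) (hh : 0 < h) :
    (∑ i, ∑ j, (![ε, -ε/2, -ε/2] : Fin 3 → ℝ) i * (![ε, -ε/2, -ε/2] : Fin 3 → ℝ) j *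
      fbmCov H ((![p, p - h, p + h] : Fin 3 → ℝ) i) ((![p, p - h, p + h] : Fin 3 → ℝ) j))
      = ε^2 * (h ^ (2*H) - (2*h) ^ (2*H) / 4) := by
  have h2H : 2 * H ≠ 0 := by positivity
  simp only [Fin.sum_univ_three, Matrix.cons_val_zero, Matrix.cons_val_one, Matrix.head_cons,
    Matrix.cons_val_two, Matrix.tail_cons, fbmCov]
  rw [show p - (p - h) = h from by ring, show p - (p + h) = -h from by ring,
    show p - h - p = -h from by ring, show p - h - (p + h) = -(2*h) from by ring,
    show p + h - p = h from by ring, show p + h - (p - h) = 2*h from by ring,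
    show p - p = (0:ℝ) from by ring, show p - h - (p - h) = (0:ℝ) from by ring,
    show p + h - (p + h) = (0:ℝ) from by ring]
  simp only [abs_zero, abs_neg, abs_of_pos hh, abs_of_pos (by positivity : (0:ℝ) < 2*h)]
  rw [Real.zero_rpow h2H]
  ring

lemma map_diff {Ω : Type*} [MeasurableSpace Ω] {P : Measure Ω} {H : ℝ} {B : Ω → ℝ → ℝ}
    (hB : IsFBM P H B) (hH : 0 < H) {p h : ℝ} (hh : 0 < h)
    (h2 : p - h ∈ Set.Icc (0:ℝ) 1) (h3 : p + h ∈ Set.Icc (0:ℝ) 1)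
    (ε : ℝ) (hε : ε = 1 ∨ ε = -1) :
    Measure.map (fun ω => ε * (B ω p - (B ω (p - h) + B ω (p + h)) / 2)) P
      = gaussianReal 0 (h ^ (2*H) - (2*h) ^ (2*H) / 4).toNNReal := by
  have h1 : p ∈ Set.Icc (0:ℝ) 1 := by
    obtain ⟨a2, b2⟩ := h2; obtain ⟨a3, b3⟩ := h3
    constructor <;> [linarith; linarith]
  have hpts : ∀ i, (![p, p - h, p + h] : Fin 3 → ℝ) i ∈ Set.Icc (0:ℝ) 1 := by
    intro i; fin_cases i <;>
      simp only [Matrix.cons_val_zero, Matrix.cons_val_one, Matrix.head_cons,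
        Matrix.cons_val_two, Matrix.tail_cons, Fin.isValue]
    exacts [h1, h2, h3]
  have hg := hB.gaussian 3 ![p, p-h, p+h] hpts ![ε, -ε/2, -ε/2]
  have hfun : (fun ω => ∑ i, (![ε, -ε/2, -ε/2] : Fin 3 → ℝ) i *
        B ω ((![p, p - h, p + h] : Fin 3 → ℝ) i))
      = fun ω => ε * (B ω p - (B ω (p-h) + B ω (p+h)) / 2) := by
    funext ω
    simp only [Fin.sum_univ_three, Matrix.cons_val_zero, Matrix.cons_val_one, Matrix.head_cons,
      Matrix.cons_val_two, Matrix.tail_cons]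
    ring
  rw [hfun] at hg
  rw [hg, fbm_var_eval H hH p h ε hh]
  have hε2 : ε^2 = 1 := by rcases hε with h | h <;> subst h <;> norm_num
  rw [hε2, one_mul]

lemma lintegral_exp_gaussian (v : ℝ≥0) (s : ℝ) :
    ∫⁻ y, ENNReal.ofReal (Real.exp (s * y)) ∂(gaussianReal 0 v)
      = ENNReal.ofReal (Real.exp (s ^ 2 * v / 2)) := by
  by_cases hv : v = 0
  · subst hv
    rw [gaussianReal_zero_var, lintegral_dirac]
    simp
  · rw [gaussianReal_of_var_ne_zero _ hv,
      lintegral_withDensity_eq_lintegral_mul _ (measurable_gaussianPDF _ _)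
        (by fun_prop)]
    have hpt : ∀ y : ℝ, (gaussianPDF 0 v * fun y => ENNReal.ofReal (Real.exp (s * y))) y
        = ENNReal.ofReal (Real.exp (s ^ 2 * v / 2)) * gaussianPDF (s * v) v y := by
      intro y
      simp only [Pi.mul_apply, gaussianPDF]
      rw [← ENNReal.ofReal_mul (gaussianPDFReal_nonneg _ _ _),
        ← ENNReal.ofReal_mul (Real.exp_nonneg _)]
      congr 1
      simp only [gaussianPDFReal]
      have hv' : (v : ℝ) ≠ 0 := by exact_mod_cast hv
      rw [mul_assoc, ← Real.exp_add, mul_comm (rexp (s ^ 2 * (v:ℝ) / 2)), mul_assoc _ (rexp _) (rexp _),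
        ← Real.exp_add]
      congr 1
      field_simp
      ring
    simp_rw [hpt]
    rw [lintegral_const_mul _ (measurable_gaussianPDF _ _), lintegral_gaussianPDF_eq_one _ hv,
      mul_one]

lemma gaussian_tail (v : ℝ≥0) (V x : ℝ) (hx : 0 < x) (hV : 0 < V) (hvV : (v : ℝ) ≤ V) :
    gaussianReal 0 v {y | x ≤ y} ≤ ENNReal.ofReal (Real.exp (-x ^ 2 / (2 * V))) := by
  set s : ℝ := x / V with hs_def
  have hs : 0 < s := div_pos hx hV
  have hmarkov := mul_meas_ge_le_lintegral₀ (μ := gaussianReal 0 v)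
    (f := fun y => ENNReal.ofReal (Real.exp (s * y)))
    (by fun_prop) (ENNReal.ofReal (Real.exp (s * x)))
  rw [lintegral_exp_gaussian] at hmarkov
  have hset : {y : ℝ | ENNReal.ofReal (Real.exp (s * x)) ≤ ENNReal.ofReal (Real.exp (s * y))}
      = {y : ℝ | x ≤ y} := by
    ext y
    simp only [Set.mem_setOf_eq]
    rw [ENNReal.ofReal_le_ofReal_iff (Real.exp_nonneg _), Real.exp_le_exp]
    exact mul_le_mul_iff_of_pos_left hs
  rw [hset] at hmarkov
  have h1 : gaussianReal 0 v {y | x ≤ y}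
      ≤ ENNReal.ofReal (Real.exp (s ^ 2 * v / 2)) / ENNReal.ofReal (Real.exp (s * x)) := by
    rw [ENNReal.le_div_iff_mul_le (Or.inl (by simp [Real.exp_pos])) (Or.inl ENNReal.ofReal_ne_top)]
    rw [mul_comm] at hmarkov
    exact hmarkov
  refine h1.trans ?_
  rw [← ENNReal.ofReal_div_of_pos (Real.exp_pos _), ← Real.exp_sub]
  apply ENNReal.ofReal_le_ofReal
  apply Real.exp_le_exp.2
  have h2 : s ^ 2 * (v : ℝ) / 2 ≤ s ^ 2 * V / 2 := by nlinarith [sq_nonneg s]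
  have h3 : s ^ 2 * V / 2 - s * x = -x ^ 2 / (2 * V) := by
    rw [hs_def]
    field_simp
    ring
  linarith

lemma point_tail {Ω : Type*} [MeasurableSpace Ω] {P : Measure Ω} [IsProbabilityMeasure P]
    {H : ℝ} {B : Ω → ℝ → ℝ} (hB : IsFBM P H B) (hH : 0 < H) {p h x : ℝ} (hh : 0 < h)
    (hx : 0 < x) (h2 : p - h ∈ Set.Icc (0:ℝ) 1) (h3 : p + h ∈ Set.Icc (0:ℝ) 1)
    (q r : ℝ) (hq : q = p - h) (hr : r = p + h) :
    P {ω | x ≤ |B ω p - (B ω q + B ω r) / 2|}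
      ≤ 2 * ENNReal.ofReal (Real.exp (-x^2 / (2 * h ^ (2*H)))) := by
  subst hq; subst hr
  set X : Ω → ℝ := fun ω => B ω p - (B ω (p - h) + B ω (p + h)) / 2 with hXdef
  have hXm : Measurable X :=
    (hB.measurable p).sub (((hB.measurable _).add (hB.measurable _)).div_const 2)
  have hV : (0:ℝ) < h ^ (2*H) := Real.rpow_pos_of_pos hh _
  have hcoe : ((h ^ (2*H) - (2*h) ^ (2*H) / 4).toNNReal : ℝ) ≤ h ^ (2*H) := by
    rw [Real.coe_toNNReal']
    apply max_le _ hV.le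
    have : (0:ℝ) ≤ (2*h) ^ (2*H) / 4 := by positivity
    linarith
  have hsub : {ω | x ≤ |X ω|} ⊆ {ω | x ≤ X ω} ∪ {ω | x ≤ -X ω} := by
    intro ω hω
    exact le_abs.mp (Set.mem_setOf_eq ▸ hω)
  have hbound : ∀ ε : ℝ, ε = 1 ∨ ε = -1 →
      P {ω | x ≤ ε * X ω} ≤ ENNReal.ofReal (Real.exp (-x^2 / (2 * h ^ (2*H)))) := by
    intro ε hε
    have hmap := map_diff hB hH hh h2 h3 ε hε
    have hXε : Measurable fun ω => ε * X ω := hXm.const_mul ε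
    have hpre : {ω | x ≤ ε * X ω} = (fun ω => ε * X ω) ⁻¹' (Set.Ici x) := rfl
    rw [hpre, ← Measure.map_apply hXε measurableSet_Ici, hmap]
    have : Set.Ici x = {y : ℝ | x ≤ y} := rfl
    rw [this]
    exact gaussian_tail _ _ x hx hV hcoe
  calc P {ω | x ≤ |X ω|} ≤ P ({ω | x ≤ X ω} ∪ {ω | x ≤ -X ω}) := measure_mono hsub
    _ ≤ P {ω | x ≤ X ω} + P {ω | x ≤ -X ω} := measure_union_le _ _
    _ ≤ ENNReal.ofReal (Real.exp (-x^2 / (2 * h ^ (2*H))))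
        + ENNReal.ofReal (Real.exp (-x^2 / (2 * h ^ (2*H)))) := by
        have hb1 := hbound 1 (Or.inl rfl)
        have hb2 := hbound (-1) (Or.inr rfl)
        simp only [one_mul, neg_one_mul] at hb1 hb2
        exact add_le_add hb1 hb2
    _ = 2 * ENNReal.ofReal (Real.exp (-x^2 / (2 * h ^ (2*H)))) := (two_mul _).symm

lemma exponent_id (H δ ρ : ℝ) (k : ℕ) :
    -(ρ * 2 ^ (-(H-δ) * (k:ℝ)))^2 / (2 * ((1:ℝ)/2^k) ^ (2*H))
      = -(ρ^2/2) * 2 ^ ((2*δ) * (k:ℝ)) := by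
  have e1 : ((1:ℝ)/2^k) = (2:ℝ) ^ (-(k:ℝ)) := by
    rw [Real.rpow_neg (by norm_num : (0:ℝ) ≤ 2), Real.rpow_natCast, one_div]
  rw [e1, ← Real.rpow_mul (by norm_num : (0:ℝ) ≤ 2)]
  have e3 : (ρ * 2 ^ (-(H-δ) * (k:ℝ)))^2 = ρ^2 * 2 ^ ((-(H-δ) * (k:ℝ)) * 2) := by
    rw [mul_pow, ← Real.rpow_natCast (2 ^ (-(H-δ) * (k:ℝ)) : ℝ) 2,
      ← Real.rpow_mul (by norm_num : (0:ℝ) ≤ 2)]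
    norm_num
  rw [e3]
  have e4 : (2:ℝ) ^ ((2*δ) * (k:ℝ))
      = 2 ^ ((-(H-δ) * (k:ℝ)) * 2) / 2 ^ (-(k:ℝ) * (2*H)) := by
    rw [← Real.rpow_sub (by norm_num : (0:ℝ) < 2)]
    congr 1
    ring
  rw [e4]
  ring

lemma mdGap_event_eq {Ω : Type*} [MeasurableSpace Ω] (B : Ω → ℝ → ℝ) (x : ℝ) (k : ℕ) :
    {ω | x ≤ mdGap (B ω) k} = ⋃ j ∈ Finset.range (2 ^ (k-1)),
      {ω | x ≤ |B ω ((2 * (j:ℝ) + 1) / 2 ^ k) -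
        (B ω ((j:ℝ) / 2 ^ (k - 1)) + B ω (((j:ℝ) + 1) / 2 ^ (k - 1))) / 2|} := by
  ext ω
  simp [mdGap, Finset.le_sup'_iff]

lemma measurableSet_mdGap_event {Ω : Type*} [MeasurableSpace Ω] {B : Ω → ℝ → ℝ}
    (hm : ∀ t : ℝ, Measurable fun ω => B ω t) (x : ℝ) (k : ℕ) :
    MeasurableSet {ω | x ≤ mdGap (B ω) k} := by
  rw [mdGap_event_eq]
  apply MeasurableSet.biUnion (Finset.range (2 ^ (k-1))).countable_toSet
  intro j _
  exact measurableSet_le measurable_const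
    (((hm _).sub (((hm _).add (hm _)).div_const 2)).abs)

lemma level_bound {Ω : Type*} [MeasurableSpace Ω] {P : Measure Ω} [IsProbabilityMeasure P]
    {H δ ρ : ℝ} {B : Ω → ℝ → ℝ} (hB : IsFBM P H B) (hH : H ∈ Set.Ioo (0:ℝ) 1)
    (hδ : δ ∈ Set.Ioo (0:ℝ) H) (hρ : 0 < ρ) (k : ℕ) (hk : 1 ≤ k) :
    P {ω | ρ * (2:ℝ) ^ (-(H - δ) * (k:ℝ)) ≤ mdGap (B ω) k}
      ≤ (2:ℝ≥0∞)^k * ENNReal.ofReal (Real.exp (-(ρ^2/2) * 2 ^ ((2*δ) * (k:ℝ)))) := by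
  set x : ℝ := ρ * (2:ℝ) ^ (-(H - δ) * (k:ℝ)) with hxdef
  have hx : 0 < x := mul_pos hρ (Real.rpow_pos_of_pos two_pos _)
  set h : ℝ := (1:ℝ)/2^k with hhdef
  have hh : 0 < h := by positivity
  have h2R : (2:ℝ)^k = 2^(k-1) * 2 := by
    rw [← pow_succ]
    congr 1
    omega
  have key : ∀ j ∈ Finset.range (2 ^ (k-1)),
      P {ω | x ≤ |B ω ((2 * (j:ℝ) + 1) / 2 ^ k) -
        (B ω ((j:ℝ) / 2 ^ (k - 1)) + B ω (((j:ℝ) + 1) / 2 ^ (k - 1))) / 2|}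
      ≤ 2 * ENNReal.ofReal (Real.exp (-x^2 / (2 * h ^ (2*H)))) := by
    intro j hj
    rw [Finset.mem_range] at hj
    have hjR : (j:ℝ) < 2^(k-1) := by exact_mod_cast hj
    have hjR' : (j:ℝ) + 1 ≤ 2^(k-1) := by
      have : (j:ℕ) + 1 ≤ 2^(k-1) := hj
      exact_mod_cast this
    set p : ℝ := (2 * (j:ℝ) + 1) / 2 ^ k with hpdef
    have hq : (j:ℝ) / 2 ^ (k-1) = p - h := by
      rw [hpdef, hhdef, h2R]
      field_simp
      ring
    have hr : ((j:ℝ) + 1) / 2 ^ (k-1) = p + h := by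
      rw [hpdef, hhdef, h2R]
      field_simp
      ring
    have h2 : p - h ∈ Set.Icc (0:ℝ) 1 := by
      rw [← hq]
      constructor
      · positivity
      · rw [div_le_one (by positivity)]
        linarith
    have h3 : p + h ∈ Set.Icc (0:ℝ) 1 := by
      rw [← hr]
      constructor
      · positivity
      · rw [div_le_one (by positivity)]
        linarith
    exact point_tail hB hH.1 hh hx h2 h3 _ _ hq hr
  calc P {ω | x ≤ mdGap (B ω) k}
      ≤ ∑ j ∈ Finset.range (2 ^ (k-1)),
        P {ω | x ≤ |B ω ((2 * (j:ℝ) + 1) / 2 ^ k) -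
          (B ω ((j:ℝ) / 2 ^ (k - 1)) + B ω (((j:ℝ) + 1) / 2 ^ (k - 1))) / 2|} := by
        rw [mdGap_event_eq]
        exact measure_biUnion_finset_le _ _
    _ ≤ ∑ _j ∈ Finset.range (2 ^ (k-1)),
        2 * ENNReal.ofReal (Real.exp (-x^2 / (2 * h ^ (2*H)))) := Finset.sum_le_sum key
    _ = (2^(k-1) : ℕ) * (2 * ENNReal.ofReal (Real.exp (-x^2 / (2 * h ^ (2*H))))) := by
        rw [Finset.sum_const, Finset.card_range, nsmul_eq_mul]
    _ ≤ (2:ℝ≥0∞)^k * ENNReal.ofReal (Real.exp (-(ρ^2/2) * 2 ^ ((2*δ) * (k:ℝ)))) := by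
        have hexp : -x^2 / (2 * h ^ (2*H)) = -(ρ^2/2) * 2 ^ ((2*δ) * (k:ℝ)) := by
          rw [hxdef, hhdef]
          exact exponent_id H δ ρ k
        rw [hexp]
        have hcard : ((2^(k-1) : ℕ) : ℝ≥0∞) * 2 ≤ (2:ℝ≥0∞)^k := by
          push_cast
          rw [← pow_succ]
          apply pow_le_pow_right₀ (by norm_num)
          omega
        calc ((2^(k-1) : ℕ) : ℝ≥0∞) * (2 * ENNReal.ofReal _)
            = (((2^(k-1) : ℕ) : ℝ≥0∞) * 2) * ENNReal.ofReal _ := by ring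
          _ ≤ (2:ℝ≥0∞)^k * ENNReal.ofReal _ :=
              mul_le_mul_of_nonneg_right hcard zero_le

lemma lastRB_eq_succ_iff (H δ ρ : ℝ) (g : ℝ → ℝ) (k : ℕ) :
    lastRB H δ ρ g = k + 1 ↔
      (ρ * (2:ℝ) ^ (-(H - δ) * ((k+1 : ℕ):ℝ)) ≤ mdGap g (k+1)
        ∧ ∀ l : ℕ, k + 1 < l → ¬ ρ * (2:ℝ) ^ (-(H - δ) * (l:ℝ)) ≤ mdGap g l) := by
  set S := {m : ℕ | 1 ≤ m ∧ ρ * (2:ℝ) ^ (-(H - δ) * (m:ℝ)) ≤ mdGap g m} with hS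
  have hlast : lastRB H δ ρ g = sSup S := rfl
  constructor
  · intro hk
    rw [hlast] at hk
    have hfin : S.Finite := by
      by_contra hinf
      have h0 : sSup S = 0 := Set.Infinite.Nat.sSup_eq_zero hinf
      omega
    have hne : S.Nonempty := by
      by_contra hem
      rw [Set.not_nonempty_iff_eq_empty] at hem
      rw [hem, csSup_empty] at hk
      simp at hk
    have hmem := Nat.sSup_mem hne hfin.bddAbove
    rw [hk] at hmem
    refine ⟨hmem.2, ?_⟩
    intro l hl hcond
    have hlS : l ∈ S := ⟨by omega, hcond⟩
    have hle := le_csSup hfin.bddAbove hlS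
    rw [hk] at hle
    omega
  · rintro ⟨h1, h2⟩
    have hmem : (k+1) ∈ S := ⟨by omega, h1⟩
    have hub : ∀ m ∈ S, m ≤ k + 1 := by
      intro m hm
      by_contra hgt
      exact h2 m (by omega) hm.2
    rw [hlast]
    exact le_antisymm (csSup_le ⟨_, hmem⟩ hub) (le_csSup ⟨k+1, hub⟩ hmem)

lemma measurableSet_lastRB_succ {Ω : Type*} [MeasurableSpace Ω] {B : Ω → ℝ → ℝ}
    (hm : ∀ t : ℝ, Measurable fun ω => B ω t) (H δ ρ : ℝ) (k : ℕ) :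
    MeasurableSet {ω | lastRB H δ ρ (B ω) = k + 1} := by
  have hset : {ω | lastRB H δ ρ (B ω) = k + 1}
      = {ω | ρ * (2:ℝ) ^ (-(H - δ) * ((k+1 : ℕ):ℝ)) ≤ mdGap (B ω) (k+1)}
        ∩ ⋂ (l : ℕ), ⋂ (_ : k + 1 < l),
          {ω | ρ * (2:ℝ) ^ (-(H - δ) * (l:ℝ)) ≤ mdGap (B ω) l}ᶜ := by
    ext ω
    rw [Set.mem_setOf_eq, lastRB_eq_succ_iff]
    simp only [Set.mem_inter_iff, Set.mem_setOf_eq, Set.mem_iInter, Set.mem_compl_iff]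
  rw [hset]
  exact (measurableSet_mdGap_event hm _ _).inter
    (MeasurableSet.iInter fun l => MeasurableSet.iInter fun _ =>
      (measurableSet_mdGap_event hm _ _).compl)

lemma measurableSet_lastRB_eq {Ω : Type*} [MeasurableSpace Ω] {B : Ω → ℝ → ℝ}
    (hm : ∀ t : ℝ, Measurable fun ω => B ω t) (H δ ρ : ℝ) (k : ℕ) :
    MeasurableSet {ω | lastRB H δ ρ (B ω) = k} := by
  cases k with
  | zero =>
    have hset : {ω | lastRB H δ ρ (B ω) = 0}
        = (⋃ k : ℕ, {ω | lastRB H δ ρ (B ω) = k + 1})ᶜ := by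
      ext ω
      simp only [Set.mem_compl_iff, Set.mem_iUnion, Set.mem_setOf_eq, not_exists]
      constructor
      · intro h l hl; omega
      · intro h
        by_contra h0
        exact h (lastRB H δ ρ (B ω) - 1) (by omega)
    rw [hset]
    exact (MeasurableSet.iUnion fun k => measurableSet_lastRB_succ hm H δ ρ k).compl
  | succ k => exact measurableSet_lastRB_succ hm H δ ρ k

lemma term_bound (t δ ρ : ℝ) (ht : 0 ≤ t) (hδ : 0 < δ) (hρ : 0 < ρ) :
    ∃ C : ℝ, 0 ≤ C ∧ ∀ k : ℕ,
      Real.exp (t*(k:ℝ)) * 2^k * Real.exp (-(ρ^2/2) * 2 ^ ((2*δ)*(k:ℝ)))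
        ≤ C * Real.exp (-1:ℝ) ^ k := by
  set L := Real.log 2 with hLdef
  have hL0 : 0 < L := Real.log_pos one_lt_two
  set c : ℝ := ρ^2/2 with hcdef
  have hc : 0 < c := by positivity
  set a : ℝ := 2*δ*L with hadef
  have ha : 0 < a := by positivity
  set c' : ℝ := c * a^2 / 4 with hc'def
  have hc' : 0 < c' := by positivity
  set b : ℝ := t + L + 1 with hbdef
  have hb : 0 < b := by positivity
  refine ⟨Real.exp (b^2/(4*c')), Real.exp_nonneg _, fun k => ?_⟩
  have h2k : (2:ℝ)^k = Real.exp ((k:ℝ) * L) := by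
    rw [← Real.exp_log (by positivity : (0:ℝ) < (2:ℝ)^k), Real.log_pow]
  have h2δk : (2:ℝ) ^ ((2*δ)*(k:ℝ)) = Real.exp (a * k) := by
    rw [Real.rpow_def_of_pos two_pos]
    congr 1
    rw [hadef]
    ring
  have hek : Real.exp (-1:ℝ) ^ k = Real.exp (-(k:ℝ)) := by
    rw [← Real.exp_nat_mul]
    congr 1
    ring
  rw [h2k, h2δk, hek, ← Real.exp_add, ← Real.exp_add, ← Real.exp_add]
  apply Real.exp_le_exp.2
  have hexpak : a^2 * (k:ℝ)^2 / 4 ≤ Real.exp (a * (k:ℝ)) := by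
    have hx : 0 ≤ a * (k:ℝ) := by positivity
    have h1 : (a*(k:ℝ))/2 + 1 ≤ Real.exp ((a*(k:ℝ))/2) := Real.add_one_le_exp _
    have h2 : Real.exp ((a*(k:ℝ))/2) ^ 2 = Real.exp (a*(k:ℝ)) := by
      rw [sq, ← Real.exp_add]
      congr 1
      ring
    nlinarith [Real.exp_pos ((a*(k:ℝ))/2)]
  have key : b * (k:ℝ) - c' * (k:ℝ)^2 ≤ b^2/(4*c') := by
    have expand : b^2/(4*c') - (b*(k:ℝ) - c'*(k:ℝ)^2) = (b - 2*c'*(k:ℝ))^2 / (4*c') := by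
      field_simp
      ring
    have hnn := div_nonneg (sq_nonneg (b - 2*c'*(k:ℝ))) (by positivity : (0:ℝ) ≤ 4*c')
    linarith
  have hmul : c * (a^2 * (k:ℝ)^2 / 4) ≤ c * Real.exp (a*(k:ℝ)) :=
    mul_le_mul_of_nonneg_left hexpak hc.le
  have hbk : b * (k:ℝ) = t*(k:ℝ) + (k:ℝ)*L + (k:ℝ) := by rw [hbdef]; ring
  have hck : c' * (k:ℝ)^2 = c * (a^2 * (k:ℝ)^2 / 4) := by rw [hc'def]; ring
  linarith

lemma series_ne_top (t δ ρ : ℝ) (ht : 0 ≤ t) (hδ : 0 < δ) (hρ : 0 < ρ) :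
    ∑' k : ℕ, ENNReal.ofReal (Real.exp (t*(k:ℝ)))
      * ((2:ℝ≥0∞)^k * ENNReal.ofReal (Real.exp (-(ρ^2/2) * 2 ^ ((2*δ)*(k:ℝ))))) ≠ ⊤ := by
  obtain ⟨C, hC0, hC⟩ := term_bound t δ ρ ht hδ hρ
  have hterm : ∀ k : ℕ, ENNReal.ofReal (Real.exp (t*(k:ℝ)))
      * ((2:ℝ≥0∞)^k * ENNReal.ofReal (Real.exp (-(ρ^2/2) * 2 ^ ((2*δ)*(k:ℝ)))))
      ≤ ENNReal.ofReal C * ENNReal.ofReal (Real.exp (-1:ℝ)) ^ k := by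
    intro k
    have h2 : (2:ℝ≥0∞)^k = ENNReal.ofReal ((2:ℝ)^k) := by
      rw [ENNReal.ofReal_pow (by norm_num : (0:ℝ) ≤ 2)]
      norm_num
    rw [h2, ← ENNReal.ofReal_mul (by positivity), ← ENNReal.ofReal_mul (Real.exp_nonneg _),
      ← ENNReal.ofReal_pow (Real.exp_nonneg _), ← ENNReal.ofReal_mul hC0]
    apply ENNReal.ofReal_le_ofReal
    calc Real.exp (t*(k:ℝ)) * ((2:ℝ)^k * Real.exp (-(ρ^2/2) * 2 ^ ((2*δ)*(k:ℝ))))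
        = Real.exp (t*(k:ℝ)) * 2^k * Real.exp (-(ρ^2/2) * 2 ^ ((2*δ)*(k:ℝ))) := by ring
      _ ≤ C * Real.exp (-1:ℝ) ^ k := hC k
  refine ne_top_of_le_ne_top ?_ (ENNReal.tsum_le_tsum hterm)
  rw [ENNReal.tsum_mul_left, ENNReal.tsum_geometric]
  apply ENNReal.mul_ne_top ENNReal.ofReal_ne_top
  rw [Ne, ENNReal.inv_eq_top, tsub_eq_zero_iff_le]
  intro h1
  have : ENNReal.ofReal (Real.exp (-1:ℝ)) < 1 :=
    ENNReal.ofReal_lt_one.2 (Real.exp_lt_one_iff.2 (by norm_num))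
  exact absurd h1 (not_le.2 this)

theorem stmt2 {Ω : Type*} [MeasurableSpace Ω] (P : Measure Ω) [IsProbabilityMeasure P]
    (H δ ν ν' ρ : ℝ) (hH : H ∈ Set.Ioo (0:ℝ) 1) (hδ : δ ∈ Set.Ioo (0:ℝ) H)
    (hν : 0 < ν) (hν' : 0 < ν') (hρ : ρ = 2 * (ν + ν'))
    (B : Ω → ℝ → ℝ) (hB : IsFBM P H B) :
    (∀ t : ℝ, 0 < t →
      ∫⁻ ω, ENNReal.ofReal (Real.exp (t * (lastRB H δ ρ (B ω) : ℝ))) ∂P < ⊤) ∧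
    (∀ᵐ ω ∂P, ∀ n : ℕ, lastRB H δ ρ (B ω) < n →
      supNorm01 (fun t => B ω t - dyadicInterp n (B ω) t) ≤
        ρ * (2:ℝ) ^ (-(H - δ) * ((n:ℝ) + 1)) / (1 - (2:ℝ) ^ (-(H - δ)))) := by
  obtain ⟨hH0, hH1⟩ := hH
  obtain ⟨hδ0, hδH⟩ := hδ
  have hρ0 : 0 < ρ := by rw [hρ]; linarith
  have hlevel : ∀ k : ℕ, 1 ≤ k →
      P {ω | ρ * (2:ℝ) ^ (-(H - δ) * (k:ℝ)) ≤ mdGap (B ω) k}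
        ≤ (2:ℝ≥0∞)^k * ENNReal.ofReal (Real.exp (-(ρ^2/2) * 2 ^ ((2*δ)*(k:ℝ)))) :=
    fun k hk => level_bound hB ⟨hH0, hH1⟩ ⟨hδ0, hδH⟩ hρ0 k hk
  have hSmeas : ∀ k : ℕ, MeasurableSet {ω | lastRB H δ ρ (B ω) = k} :=
    measurableSet_lastRB_eq hB.measurable H δ ρ
  have hsucc_sub : ∀ k : ℕ, {ω | lastRB H δ ρ (B ω) = k + 1}
      ⊆ {ω | ρ * (2:ℝ) ^ (-(H - δ) * ((k+1:ℕ):ℝ)) ≤ mdGap (B ω) (k+1)} := by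
    intro k ω hω
    exact ((lastRB_eq_succ_iff H δ ρ (B ω) k).1 hω).1
  constructor
  · -- part (i)
    intro t ht
    have hpt : ∀ ω : Ω, ENNReal.ofReal (Real.exp (t * (lastRB H δ ρ (B ω) : ℝ)))
        = ∑' k : ℕ, Set.indicator {ω' | lastRB H δ ρ (B ω') = k}
            (fun _ => ENNReal.ofReal (Real.exp (t * (k:ℝ)))) ω := by
      intro ω
      rw [tsum_eq_single (lastRB H δ ρ (B ω))]
      · rw [Set.indicator_of_mem (by exact rfl)]
      · intro k hk
        exact Set.indicator_of_notMem (fun hmem => hk (Set.mem_setOf_eq ▸ hmem).symm) _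
    have hint : ∫⁻ ω, ENNReal.ofReal (Real.exp (t * (lastRB H δ ρ (B ω) : ℝ))) ∂P
        = ∑' k : ℕ, ENNReal.ofReal (Real.exp (t * (k:ℝ)))
            * P {ω | lastRB H δ ρ (B ω) = k} := by
      rw [lintegral_congr hpt, lintegral_tsum
        (fun k => (measurable_const.indicator (hSmeas k)).aemeasurable)]
      exact tsum_congr fun k => lintegral_indicator_const (hSmeas k) _
    rw [hint, tsum_eq_zero_add' ENNReal.summable]
    have h0 : ENNReal.ofReal (Real.exp (t * ((0:ℕ):ℝ)))
        * P {ω | lastRB H δ ρ (B ω) = 0} ≤ 1 := by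
      simp only [Nat.cast_zero, mul_zero, Real.exp_zero, ENNReal.ofReal_one, one_mul]
      exact prob_le_one
    have htail : ∑' k : ℕ, ENNReal.ofReal (Real.exp (t * ((k+1:ℕ):ℝ)))
        * P {ω | lastRB H δ ρ (B ω) = k + 1}
        ≤ ∑' k : ℕ, ENNReal.ofReal (Real.exp (t*(k:ℝ)))
            * ((2:ℝ≥0∞)^k * ENNReal.ofReal (Real.exp (-(ρ^2/2) * 2 ^ ((2*δ)*(k:ℝ))))) := by
      have hstep : ∀ k : ℕ, ENNReal.ofReal (Real.exp (t * ((k+1:ℕ):ℝ)))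
          * P {ω | lastRB H δ ρ (B ω) = k + 1}
          ≤ ENNReal.ofReal (Real.exp (t*((k+1:ℕ):ℝ)))
            * ((2:ℝ≥0∞)^(k+1)
              * ENNReal.ofReal (Real.exp (-(ρ^2/2) * 2 ^ ((2*δ)*((k+1:ℕ):ℝ))))) := by
        intro k
        refine mul_le_mul_of_nonneg_left ?_ zero_le
        exact (measure_mono (hsucc_sub k)).trans (hlevel (k+1) (by omega))
      refine (ENNReal.tsum_le_tsum hstep).trans ?_
      rw [tsum_eq_zero_add' (f := fun k : ℕ => ENNReal.ofReal (Real.exp (t*(k:ℝ)))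
        * ((2:ℝ≥0∞)^k * ENNReal.ofReal (Real.exp (-(ρ^2/2) * 2 ^ ((2*δ)*(k:ℝ))))))
        ENNReal.summable]
      exact le_add_self
    have hfin := series_ne_top t δ ρ ht.le hδ0 hρ0
    calc ENNReal.ofReal (Real.exp (t * ((0:ℕ):ℝ))) * P {ω | lastRB H δ ρ (B ω) = 0}
        + ∑' k : ℕ, ENNReal.ofReal (Real.exp (t * ((k+1:ℕ):ℝ)))
          * P {ω | lastRB H δ ρ (B ω) = k + 1}
        ≤ 1 + ∑' k : ℕ, ENNReal.ofReal (Real.exp (t*(k:ℝ)))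
            * ((2:ℝ≥0∞)^k * ENNReal.ofReal (Real.exp (-(ρ^2/2) * 2 ^ ((2*δ)*(k:ℝ))))) :=
          add_le_add h0 htail
      _ < ⊤ := ENNReal.add_lt_top.2 ⟨ENNReal.one_lt_top, hfin.lt_top⟩
  · -- part (ii)
    have hsum0 : ∑' k : ℕ, P {ω | ρ * (2:ℝ) ^ (-(H - δ) * (k:ℝ)) ≤ mdGap (B ω) k} ≠ ⊤ := by
      rw [tsum_eq_zero_add' ENNReal.summable]
      refine ENNReal.add_ne_top.2 ⟨measure_ne_top P _, ?_⟩
      have hstep : ∀ k : ℕ,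
          P {ω | ρ * (2:ℝ) ^ (-(H - δ) * ((k+1:ℕ):ℝ)) ≤ mdGap (B ω) (k+1)}
          ≤ ENNReal.ofReal (Real.exp (1*((k+1:ℕ):ℝ)))
            * ((2:ℝ≥0∞)^(k+1)
              * ENNReal.ofReal (Real.exp (-(ρ^2/2) * 2 ^ ((2*δ)*((k+1:ℕ):ℝ))))) := by
        intro k
        refine (hlevel (k+1) (by omega)).trans ?_
        conv_lhs => rw [← one_mul ((2:ℝ≥0∞)^(k+1) * _)]
        refine mul_le_mul_of_nonneg_right ?_ zero_le
        rw [show (1:ℝ≥0∞) = ENNReal.ofReal 1 from ENNReal.ofReal_one.symm]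
        exact ENNReal.ofReal_le_ofReal (Real.one_le_exp (by positivity))
      refine ne_top_of_le_ne_top ?_ (ENNReal.tsum_le_tsum hstep)
      have hfin := series_ne_top 1 δ ρ (by norm_num) hδ0 hρ0
      refine ne_top_of_le_ne_top hfin ?_
      rw [tsum_eq_zero_add' (f := fun k : ℕ => ENNReal.ofReal (Real.exp (1*(k:ℝ)))
        * ((2:ℝ≥0∞)^k * ENNReal.ofReal (Real.exp (-(ρ^2/2) * 2 ^ ((2*δ)*(k:ℝ))))))
        ENNReal.summable]
      exact le_add_self
    filter_upwards [ae_finite_setOf_mem hsum0] with ω hfin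
    intro n hn
    have hbdd : BddAbove {m : ℕ | 1 ≤ m ∧ ρ * (2:ℝ) ^ (-(H - δ) * (m:ℝ)) ≤ mdGap (B ω) m} := by
      apply Set.Finite.bddAbove
      apply hfin.subset
      intro m hm
      exact hm.2
    have hgap : ∀ k, n < k → mdGap (B ω) k ≤ ρ * 2 ^ (-(H - δ) * (k:ℝ)) := by
      intro k hk
      by_contra hcon
      push_neg at hcon
      have hmem : k ∈ {m : ℕ | 1 ≤ m ∧ ρ * (2:ℝ) ^ (-(H - δ) * (m:ℝ)) ≤ mdGap (B ω) m} :=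
        ⟨by omega, hcon.le⟩
      have hle := le_csSup hbdd hmem
      have hNk : lastRB H δ ρ (B ω)
          = sSup {m : ℕ | 1 ≤ m ∧ ρ * (2:ℝ) ^ (-(H - δ) * (m:ℝ)) ≤ mdGap (B ω) m} := rfl
      rw [← hNk] at hle
      omega
    exact det_bound (hB.continuousOn ω) (by linarith : 0 < H - δ) hρ0.le n hgap

end
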